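/- (Comparison of B' with B.) Let p > 1, κ ∈ [0,1] and 0 < γ ≤ Γ. Let B : [0,∞) → ℝ be continuous with B(0) = 0, continuously differentiable on (0,∞), and suppose γ (κ + t)^{p−2} t ≤ B'(t) ≤ Γ (κ + t)^{p−2} t for all t > 0. Then there exists a constant C > 0, depending only on p, γ and Γ, such that B'(t) t ≤ C B(t) for all t > 0. -/
import Mathlib


/-- **Comparison of `B'` with `B`.**
Let `p > 1`, `κ ∈ [0,1]`, `0 < γ ≤ Γ`, and let `B : [0,∞) → ℝ` be continuous with
`B 0 = 0`, continuously differentiable on `(0,∞)` with derivative `B'`, satisfying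
`γ (κ + t)^(p−2) t ≤ B' t ≤ Γ (κ + t)^(p−2) t` for `t > 0`. Then there is `C > 0`
(depending only on `p, γ, Γ`) with `B' t * t ≤ C * B t` for all `t > 0`. -/
theorem deriv_mul_le_const_mul_self
    (p κ γ Γ : ℝ) (hp : 1 < p) (hκ0 : 0 ≤ κ) (hκ1 : κ ≤ 1) (hγ : 0 < γ) (hγΓ : γ ≤ Γ)
    (B B' : ℝ → ℝ)
    (hBcont : ContinuousOn B (Set.Ici 0)) (hB0 : B 0 = 0)
    (hBderiv : ∀ t : ℝ, 0 < t → HasDerivAt B (B' t) t)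
    (hB'cont : ContinuousOn B' (Set.Ioi 0))
    (hbounds : ∀ t : ℝ, 0 < t →
      γ * (κ + t) ^ (p - 2) * t ≤ B' t ∧ B' t ≤ Γ * (κ + t) ^ (p - 2) * t) :
    ∃ C : ℝ, 0 < C ∧ ∀ t : ℝ, 0 < t → B' t * t ≤ C * B t := by
  have hΓ : 0 < Γ := hγ.trans_le hγΓ
  set m : ℝ := min ((2:ℝ) ^ (2 - p)) 1 with hm_def
  have hm : 0 < m := lt_min (Real.rpow_pos_of_pos two_pos _) one_pos
  refine ⟨4 * Γ / (γ * m), by positivity, fun t ht => ?_⟩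
  -- B is monotone on [0,∞), hence B (t/2) ≥ 0
  have hmono : StrictMonoOn B (Set.Ici (0:ℝ)) := by
    apply strictMonoOn_of_deriv_pos (convex_Ici 0) hBcont
    intro x hx
    rw [interior_Ici] at hx
    have hx' : 0 < x := hx
    rw [(hBderiv x hx').deriv]
    have := (hbounds x hx').1
    have hpos : 0 < γ * (κ + x) ^ (p - 2) * x := by
      have : (0:ℝ) < (κ + x) ^ (p - 2) := Real.rpow_pos_of_pos (by linarith) _
      positivity
    linarith
  have hBhalf : 0 ≤ B (t / 2) := by
    have := hmono (Set.self_mem_Ici) (Set.mem_Ici.2 (by linarith : (0:ℝ) ≤ t / 2))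
      (by linarith : (0:ℝ) < t / 2)
    rw [hB0] at this; linarith
  -- Mean value theorem on [t/2, t]
  have hab : t / 2 < t := by linarith
  obtain ⟨ξ, hξ, hξeq⟩ := exists_hasDerivAt_eq_slope B B' hab
    (hBcont.mono (fun x hx => Set.mem_Ici.2 (le_trans (by linarith) hx.1)))
    (fun x hx => hBderiv x (lt_trans (by linarith) hx.1))
  obtain ⟨hξ1, hξ2⟩ := hξ
  have hξ0 : 0 < ξ := lt_trans (by linarith) hξ1
  have hA : (0:ℝ) < (κ + t) ^ (p - 2) := Real.rpow_pos_of_pos (by linarith) _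
  have hAξ : (0:ℝ) < (κ + ξ) ^ (p - 2) := Real.rpow_pos_of_pos (by linarith) _
  -- key: (κ+ξ)^(p-2) ≥ m * (κ+t)^(p-2)
  have hkey : m * (κ + t) ^ (p - 2) ≤ (κ + ξ) ^ (p - 2) := by
    rcases le_total p 2 with h2 | h2
    · have h1 : (κ + t) ^ (p - 2) ≤ (κ + ξ) ^ (p - 2) :=
        Real.rpow_le_rpow_of_nonpos (by linarith) (by linarith) (by linarith)
      have : m ≤ 1 := min_le_right _ _
      nlinarith
    · have hbase : (κ + t) / 2 ≤ κ + ξ := by linarith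
      have h1 : ((κ + t) / 2) ^ (p - 2) ≤ (κ + ξ) ^ (p - 2) :=
        Real.rpow_le_rpow (by positivity) hbase (by linarith)
      have h2' : ((κ + t) / 2) ^ (p - 2) = (κ + t) ^ (p - 2) / (2:ℝ) ^ (p - 2) :=
        Real.div_rpow (by linarith : (0:ℝ) ≤ κ + t) (by norm_num : (0:ℝ) ≤ 2) _
      have h3 : (2:ℝ) ^ (2 - p) = ((2:ℝ) ^ (p - 2))⁻¹ := by
        rw [show (2:ℝ) - p = -(p - 2) by ring, Real.rpow_neg (by norm_num)]
      have h4 : (0:ℝ) < (2:ℝ) ^ (p - 2) := Real.rpow_pos_of_pos two_pos _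
      have hmle : m ≤ (2:ℝ) ^ (2 - p) := min_le_left _ _
      have : m * (κ + t) ^ (p - 2) ≤ (κ + t) ^ (p - 2) / (2:ℝ) ^ (p - 2) := by
        rw [div_eq_mul_inv, ← h3]
        nlinarith
      linarith [h2'.symm.le.trans h1]
  -- lower bound for B t
  have hBt : γ * m * (κ + t) ^ (p - 2) * (t / 2) * (t / 2) ≤ B t := by
    have hslope : B t - B (t / 2) = B' ξ * (t / 2) := by
      have : t - t / 2 = t / 2 := by ring
      rw [this] at hξeq
      field_simp at hξeq ⊢
      linarith
    have hB'ξ : γ * m * (κ + t) ^ (p - 2) * (t / 2) ≤ B' ξ := by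
      have := (hbounds ξ hξ0).1
      have h5 : γ * (m * (κ + t) ^ (p - 2)) * (t / 2) ≤ γ * (κ + ξ) ^ (p - 2) * ξ := by
        apply mul_le_mul (by nlinarith) (by linarith) (by linarith) (by positivity)
      linarith [h5]
    nlinarith [mul_le_mul_of_nonneg_right hB'ξ (by linarith : (0:ℝ) ≤ t / 2)]
  -- upper bound for B' t * t
  have hup : B' t * t ≤ Γ * (κ + t) ^ (p - 2) * t * t :=
    mul_le_mul_of_nonneg_right (hbounds t ht).2 ht.le
  -- combine
  have hC : 4 * Γ / (γ * m) * (γ * m * (κ + t) ^ (p - 2) * (t / 2) * (t / 2))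
      = Γ * (κ + t) ^ (p - 2) * t * t := by
    field_simp
    ring
  calc B' t * t ≤ Γ * (κ + t) ^ (p - 2) * t * t := hup
    _ = 4 * Γ / (γ * m) * (γ * m * (κ + t) ^ (p - 2) * (t / 2) * (t / 2)) := hC.symm
    _ ≤ 4 * Γ / (γ * m) * B t := by
        apply mul_le_mul_of_nonneg_left hBt (by positivity)
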